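/- arXiv:0806.4785 — 10 statements merged into one kernel-verified Lean document; each statement's English description precedes it below -/
import Mathlib

section
/- For any suits X⁺ and Y⁺ over A and any J-saturated disjoint cover operation ∪_J, the set {V : ∃ V₁ ∈ X⁺, V₂ ∈ Y⁺, V = V₁ ∪ V₂, V₁ ∩ V₂ = ∅, and both V₁ and V₂ are closed under the equivalence ≈_J restricted to V} is again a suit. -/
open Set

/-- A pair of sets of teams (truth coordinate, falsity coordinate). -/
abbrev DPair (α : Type*) := Set (Set α) × Set (Set α)

/-- A suit: a nonempty, downward-closed collection of teams. -/
def Suit {α : Type*} (X : Set (Set α)) : Prop :=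
  X.Nonempty ∧ ∀ V ∈ X, ∀ V' ⊆ V, V' ∈ X

/-- A double suit: a pair of suits intersecting exactly in {∅}. -/
def DoubleSuit {α : Type*} (X : DPair α) : Prop :=
  Suit X.1 ∧ Suit X.2 ∧ X.1 ∩ X.2 = {∅}

def dsZero {α : Type*} : DPair α := ({∅}, Set.univ)
def dsOne {α : Type*} : DPair α := (Set.univ, {∅})
def dsOmega {α : Type*} : DPair α := ({∅}, {∅})

def dsNeg {α : Type*} (X : DPair α) : DPair α := (X.2, X.1)

/-- `X +_N Y` (J = full index set). -/
def plusN {α : Type*} (X Y : DPair α) : DPair α := (X.1 ∪ Y.1, X.2 ∩ Y.2)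

/-- `X ·_N Y` (J = full index set). -/
def dotN {α : Type*} (X Y : DPair α) : DPair α := (X.1 ∩ Y.1, X.2 ∪ Y.2)

/-- `X +_∅ Y`: truth coordinate given by disjoint unions. -/
def plusE {α : Type*} (X Y : DPair α) : DPair α :=
  ({V | ∃ V₁ ∈ X.1, ∃ V₂ ∈ Y.1, V = V₁ ∪ V₂ ∧ V₁ ∩ V₂ = ∅}, X.2 ∩ Y.2)

/-- `X ·_∅ Y`. -/
def dotE {α : Type*} (X Y : DPair α) : DPair α :=
  (X.1 ∩ Y.1, {W | ∃ W₁ ∈ X.2, ∃ W₂ ∈ Y.2, W = W₁ ∪ W₂ ∧ W₁ ∩ W₂ = ∅})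

/-- The partial order `X ≤ Y` iff `X⁺ ⊆ Y⁺` and `Y⁻ ⊆ X⁻`. -/
def leD {α : Type*} (X Y : DPair α) : Prop := X.1 ⊆ Y.1 ∧ Y.2 ⊆ X.2

/-- `a ≈_J b`: valuations agreeing outside `J`. -/
def approxJ {N A : Type*} (J : Set N) (a b : N → A) : Prop := ∀ i ∉ J, a i = b i

/-- `V = V₁ ∪_J V₂`: a J-saturated disjoint cover of `V`. -/
def unionJ {N A : Type*} (J : Set N) (V V₁ V₂ : Set (N → A)) : Prop :=
  V = V₁ ∪ V₂ ∧ V₁ ∩ V₂ = ∅ ∧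
  ∀ a ∈ V, ∀ b ∈ V, approxJ J a b → (a ∈ V₁ → b ∈ V₁) ∧ (a ∈ V₂ → b ∈ V₂)

/-- `X +_J Y`. -/
def plusJ {N A : Type*} (J : Set N) (X Y : DPair (N → A)) : DPair (N → A) :=
  ({V | ∃ V₁ ∈ X.1, ∃ V₂ ∈ Y.1, unionJ J V V₁ V₂}, X.2 ∩ Y.2)

/-- `X ·_J Y`. -/
def dotJ {N A : Type*} (J : Set N) (X Y : DPair (N → A)) : DPair (N → A) :=
  (X.1 ∩ Y.1, {W | ∃ W₁ ∈ X.2, ∃ W₂ ∈ Y.2, unionJ J W W₁ W₂})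

/-- `nsum X n` is the (n+1)-fold sum `X +_∅ ⋯ +_∅ X`. -/
def nsum {α : Type*} (X : DPair α) : ℕ → DPair α
  | 0 => X
  | n + 1 => plusE X (nsum X n)

/-- The order of `X`: the least positive `n` whose `n`-fold `+_∅` sum of `X` is 1
(`⊤` if there is none). -/
noncomputable def ordOf {α : Type*} (X : DPair α) : ℕ∞ :=
  sInf {m : ℕ∞ | ∃ n : ℕ, m = (n : ℕ∞) + 1 ∧ nsum X n = dsOne}


theorem stmt1 {N A : Type*} (J : Set N) (X Y : Set (Set (N → A)))
    (hX : Suit X) (hY : Suit Y) :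
    Suit {V | ∃ V₁ ∈ X, ∃ V₂ ∈ Y, unionJ J V V₁ V₂} := by
  constructor
  · obtain ⟨hXne, hXd⟩ := hX
    obtain ⟨hYne, hYd⟩ := hY
    obtain ⟨V, hV⟩ := hXne
    obtain ⟨W, hW⟩ := hYne
    refine ⟨∅, ∅, hXd V hV ∅ (empty_subset _), ∅, hYd W hW ∅ (empty_subset _), ?_⟩
    refine ⟨by simp, by simp, ?_⟩
    intro a ha; simp at ha
  · rintro V ⟨V₁, hV₁, V₂, hV₂, hcov, hdisj, hsat⟩ V' hV'
    refine ⟨V₁ ∩ V', hX.2 V₁ hV₁ _ inter_subset_left,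
            V₂ ∩ V', hY.2 V₂ hV₂ _ inter_subset_left, ?_, ?_, ?_⟩
    · rw [← union_inter_distrib_right, ← hcov]
      exact (inter_eq_right.mpr hV').symm
    · rw [Set.eq_empty_iff_forall_notMem]
      rintro a ⟨⟨h1, -⟩, ⟨h2, -⟩⟩
      exact Set.eq_empty_iff_forall_notMem.mp hdisj a ⟨h1, h2⟩
    · intro a ha b hb hab
      have haV : a ∈ V := hcov ▸ hV' ha
      have hbV : b ∈ V := hcov ▸ hV' hb
      have := hsat a haV b hbV hab
      exact ⟨fun h => ⟨this.1 h.1, hb⟩, fun h => ⟨this.2 h.1, hb⟩⟩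
end

section
/- If X and Y are double suits, X ≤ Y, and Y is flat (Y⁺ = P(V) for some team V), then X +_J Y = Y for every J ⊆ N. -/
open Set

theorem stmt3 {N A : Type*} (X Y : DPair (N → A))
    (hX : DoubleSuit X) (hY : DoubleSuit Y)
    (hXY : leD X Y) (hflat : ∃ V : Set (N → A), Y.1 = 𝒫 V) :
    ∀ J : Set N, plusJ J X Y = Y := by
  intro J
  obtain ⟨V, hV⟩ := hflat
  obtain ⟨W0, hW0⟩ := hX.1.1
  have hempX : ∅ ∈ X.1 := hX.1.2 W0 hW0 ∅ (Set.empty_subset _)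
  have h2 : X.2 ∩ Y.2 = Y.2 := Set.inter_eq_right.mpr hXY.2
  unfold plusJ
  ext1
  · ext U
    simp only [Set.mem_setOf_eq]
    constructor
    · rintro ⟨V₁, hV₁, V₂, hV₂, hu, -, -⟩
      have h1 : V₁ ⊆ V := by have := hXY.1 hV₁; rwa [hV] at this
      have h2' : V₂ ⊆ V := by rwa [hV] at hV₂
      rw [hV]
      rw [hu]
      exact Set.union_subset h1 h2'
    · intro hU
      refine ⟨∅, hempX, U, hU, ?_, ?_, ?_⟩
      · simp
      · simp
      · intro a ha b hb hab
        exact ⟨fun h => h.elim, fun _ => hb⟩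
  · exact h2
end

section
/- If X and Y are double suits then X +_N Y = (X⁺ ∪ Y⁺, X⁻ ∩ Y⁻) and X ·_N Y = (X⁺ ∩ Y⁺, X⁻ ∪ Y⁻); moreover X +_N Y and X ·_N Y are again double suits. -/
open Set

lemma unionJ_univ_iff {N A : Type*} (V V₁ V₂ : Set (N → A)) :
    unionJ (Set.univ : Set N) V V₁ V₂ ↔
      (V₁ = V ∧ V₂ = ∅) ∨ (V₁ = ∅ ∧ V₂ = V) := by
  constructor
  · rintro ⟨hcov, hdisj, hsat⟩
    rcases Set.eq_empty_or_nonempty V₁ with h1 | ⟨a, ha⟩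
    · right
      exact ⟨h1, by rw [hcov, h1, Set.empty_union]⟩
    · left
      have haV : a ∈ V := hcov ▸ Or.inl ha
      have hV2 : V₂ = ∅ := by
        rw [Set.eq_empty_iff_forall_notMem]
        intro b hb
        have hbV : b ∈ V := hcov ▸ Or.inr hb
        have : b ∈ V₁ := (hsat a haV b hbV (fun i hi => absurd (Set.mem_univ i) hi)).1 ha
        exact absurd (Set.eq_empty_iff_forall_notMem.mp hdisj b) (by simp [this, hb])
      exact ⟨by rw [hcov, hV2, Set.union_empty], hV2⟩
  · rintro (⟨h1, h2⟩ | ⟨h1, h2⟩) <;> subst h1 <;> subst h2 <;>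
      exact ⟨by simp, by simp, fun a ha b hb _ => by simp_all⟩

lemma suit_empty_mem {α : Type*} {X : Set (Set α)} (h : Suit X) : (∅ : Set α) ∈ X := by
  obtain ⟨⟨V, hV⟩, hdc⟩ := h
  exact hdc V hV ∅ (Set.empty_subset V)

lemma fst_eq {N A : Type*} (X Y : DPair (N → A)) (hX : Suit X.1) (hY : Suit Y.1) :
    {V | ∃ V₁ ∈ X.1, ∃ V₂ ∈ Y.1, unionJ (Set.univ : Set N) V V₁ V₂} = X.1 ∪ Y.1 := by
  ext V
  simp only [Set.mem_setOf_eq, Set.mem_union]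
  constructor
  · rintro ⟨V₁, h₁, V₂, h₂, hu⟩
    rcases (unionJ_univ_iff V V₁ V₂).mp hu with ⟨e1, _⟩ | ⟨_, e2⟩
    · exact Or.inl (e1 ▸ h₁)
    · exact Or.inr (e2 ▸ h₂)
  · rintro (h | h)
    · exact ⟨V, h, ∅, suit_empty_mem hY, (unionJ_univ_iff V V ∅).mpr (Or.inl ⟨rfl, rfl⟩)⟩
    · exact ⟨∅, suit_empty_mem hX, V, h, (unionJ_univ_iff V ∅ V).mpr (Or.inr ⟨rfl, rfl⟩)⟩

lemma ds_union_inter {α : Type*} (X Y : DPair α) (hX : DoubleSuit X) (hY : DoubleSuit Y) :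
    DoubleSuit ((X.1 ∪ Y.1, X.2 ∩ Y.2) : DPair α) := by
  obtain ⟨⟨hXn, hXd⟩, ⟨hX2n, hX2d⟩, hXi⟩ := hX
  obtain ⟨⟨hYn, hYd⟩, ⟨hY2n, hY2d⟩, hYi⟩ := hY
  refine ⟨⟨hXn.mono Set.subset_union_left,
      fun V hV V' hV' => hV.imp (fun h => hXd V h V' hV') (fun h => hYd V h V' hV')⟩,
    ⟨⟨∅, suit_empty_mem ⟨hX2n, hX2d⟩, suit_empty_mem ⟨hY2n, hY2d⟩⟩,
      fun V hV V' hV' => ⟨hX2d V hV.1 V' hV', hY2d V hV.2 V' hV'⟩⟩, ?_⟩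
  apply Set.Subset.antisymm
  · rintro V ⟨(h | h), h2, h3⟩
    · exact hXi ▸ ⟨h, h2⟩
    · exact hYi ▸ ⟨h, h3⟩
  · rintro V rfl
    exact ⟨Or.inl (suit_empty_mem ⟨hXn, hXd⟩),
      suit_empty_mem ⟨hX2n, hX2d⟩, suit_empty_mem ⟨hY2n, hY2d⟩⟩

lemma dsNeg_ds {α : Type*} {X : DPair α} (h : DoubleSuit X) : DoubleSuit (dsNeg X) :=
  ⟨h.2.1, h.1, by rw [Set.inter_comm]; exact h.2.2⟩

theorem stmt5 {N A : Type*} (X Y : DPair (N → A))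
    (hX : DoubleSuit X) (hY : DoubleSuit Y) :
    plusJ (Set.univ : Set N) X Y = plusN X Y ∧
    dotJ (Set.univ : Set N) X Y = dotN X Y ∧
    DoubleSuit (plusN X Y) ∧ DoubleSuit (dotN X Y) := by
  have hplus : plusJ (Set.univ : Set N) X Y = plusN X Y := by
    unfold plusJ plusN
    rw [fst_eq X Y hX.1 hY.1]
  have hdot : dotJ (Set.univ : Set N) X Y = dotN X Y := by
    unfold dotJ dotN
    have := fst_eq (dsNeg X) (dsNeg Y) hX.2.1 hY.2.1
    simp only [dsNeg] at this
    rw [this]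
  refine ⟨hplus, hdot, ds_union_inter X Y hX hY, ?_⟩
  have := ds_union_inter (dsNeg X) (dsNeg Y) (dsNeg_ds hX) (dsNeg_ds hY)
  exact dsNeg_ds this
end

section
/- The number of double suits over a 1-element set is 3, over a 2-element set is 11, and over a 3-element set is 55. -/
open Set

open Finset in
def suitF {n : ℕ} (F : Finset (Finset (Fin n))) : Prop :=
  F.Nonempty ∧ ∀ V ∈ F, ∀ V' ⊆ V, V' ∈ F
instance {n : ℕ} (F) : Decidable (suitF (n := n) F) := by unfold suitF; infer_instance

def cnt (n : ℕ) : ℕ :=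
  ∑ F ∈ (Finset.univ.filter (suitF (n := n))),
    ((Finset.univ.filter (suitF (n := n))).filter (fun G => F ∩ G = {∅})).card

noncomputable def eqv (n : ℕ) : Finset (Finset (Fin n)) ≃ Set (Set (Fin n)) where
  toFun F := {V | (Set.toFinite V).toFinset ∈ F}
  invFun X := (Set.toFinite {s : Finset (Fin n) | (↑s : Set (Fin n)) ∈ X}).toFinset
  left_inv F := by ext s; simp [Set.Finite.mem_toFinset]
  right_inv X := by ext V; simp [Set.Finite.mem_toFinset]

lemma suit_eqv {n : ℕ} (F : Finset (Finset (Fin n))) : Suit (eqv n F) ↔ suitF F := by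
  constructor
  · rintro ⟨⟨V, hV⟩, hcl⟩
    refine ⟨⟨(Set.toFinite V).toFinset, hV⟩, ?_⟩
    intro s hs t hts
    have h1 : (↑s : Set (Fin n)) ∈ eqv n F := by simpa [eqv] using hs
    have h2 : (↑t : Set (Fin n)) ∈ eqv n F := hcl _ h1 _ (by exact_mod_cast hts)
    simpa [eqv] using h2
  · rintro ⟨⟨s, hs⟩, hcl⟩
    refine ⟨⟨↑s, by simpa [eqv] using hs⟩, ?_⟩
    intro V hV V' hV'
    exact hcl _ hV _ (Set.Finite.toFinset_subset_toFinset.mpr hV')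

lemma inter_eqv {n : ℕ} (F G : Finset (Finset (Fin n))) :
    eqv n F ∩ eqv n G = {∅} ↔ F ∩ G = {∅} := by
  have h : eqv n F ∩ eqv n G = eqv n (F ∩ G) := by
    ext V; simp [eqv]
  have h2 : ({∅} : Set (Set (Fin n))) = eqv n {∅} := by
    ext V; simp [eqv, Set.Finite.toFinset_eq_empty]
  rw [h, h2]
  exact ⟨fun hh => (eqv n).injective hh, fun hh => by rw [hh]⟩

lemma ds_eqv {n : ℕ} (p : Finset (Finset (Fin n)) × Finset (Finset (Fin n))) :
    (suitF p.1 ∧ suitF p.2 ∧ p.1 ∩ p.2 = {∅}) ↔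
      DoubleSuit (((eqv n).prodCongr (eqv n)) p) := by
  unfold DoubleSuit
  simp only [Equiv.prodCongr_apply, Prod.map_fst, Prod.map_snd]
  rw [suit_eqv, suit_eqv, inter_eqv]

lemma card_pairs {α : Type*} [Fintype α] [DecidableEq α] (P : α → Prop) [DecidablePred P]
    (C : α → α → Prop) [∀ a, DecidablePred (C a)] :
    Nat.card {p : α × α // P p.1 ∧ P p.2 ∧ C p.1 p.2} =
      ∑ a ∈ Finset.univ.filter P, ((Finset.univ.filter P).filter (C a)).card := by
  classical
  rw [Nat.card_eq_fintype_card, Fintype.card_subtype]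
  set s := (Finset.univ : Finset (α × α)).filter (fun p => P p.1 ∧ P p.2 ∧ C p.1 p.2) with hs
  rw [Finset.card_eq_sum_card_fiberwise (f := Prod.fst) (t := Finset.univ.filter P)
    (fun p hp => by simp only [hs, Finset.mem_coe, Finset.mem_filter] at hp ⊢; exact ⟨Finset.mem_univ _, hp.2.1⟩)]
  refine Finset.sum_congr rfl fun a ha => ?_
  have ha' : P a := (Finset.mem_filter.mp ha).2
  have himg : s.filter (fun p => p.1 = a)
      = ((Finset.univ.filter P).filter (C a)).image (fun b => (a, b)) := by
    ext p
    simp only [hs, Finset.mem_filter, Finset.mem_image, Finset.mem_univ, true_and]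
    constructor
    · rintro ⟨⟨h1, h2, h3⟩, h4⟩
      exact ⟨p.2, ⟨h2, by rwa [h4] at h3⟩, by rw [← h4]⟩
    · rintro ⟨b, ⟨hb1, hb2⟩, rfl⟩
      exact ⟨⟨ha', hb1, hb2⟩, rfl⟩
  rw [himg, Finset.card_image_of_injective _ (fun x y h => by simpa using h)]

lemma card_ds (n : ℕ) : Nat.card {X : DPair (Fin n) // DoubleSuit X} = cnt n := by
  have := Nat.card_congr
    ((((eqv n).prodCongr (eqv n)).subtypeEquiv (ds_eqv (n := n)))).symm
  rw [this]
  exact card_pairs (suitF (n := n)) (fun F G => F ∩ G = {∅})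


set_option maxRecDepth 100000 in
theorem stmt8 :
    Nat.card {X : DPair (Fin 1) // DoubleSuit X} = 3 ∧
    Nat.card {X : DPair (Fin 2) // DoubleSuit X} = 11 ∧
    Nat.card {X : DPair (Fin 3) // DoubleSuit X} = 55 := by
  refine ⟨?_, ?_, ?_⟩ <;> rw [card_ds] <;> decide
end

section
/- Let A = {0,1} with N = 1, and consider the double suits A₀ = (P({0}) ∪ P({1}), {∅}) and B₀ = (P({0}), {∅}) over A (here teams are subsets of A). Then A₀ +_∅ A₀ = 1 while B₀ +_∅ B₀ = B₀; in particular A₀ has order 2 under +_∅ while B₀ has infinite order. -/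
open Set

/-- `A₀ = (P({0}) ∪ P({1}), {∅})` over `A = {0,1}`. -/
def A₀ : DPair (Fin 2) := (𝒫 ({0} : Set (Fin 2)) ∪ 𝒫 ({1} : Set (Fin 2)), {∅})

/-- `B₀ = (P({0}), {∅})` over `A = {0,1}`. -/
def B₀ : DPair (Fin 2) := (𝒫 ({0} : Set (Fin 2)), {∅})

lemma partA : plusE A₀ A₀ = dsOne := by
  unfold plusE A₀ dsOne
  refine Prod.ext ?_ (by simp)
  ext V
  simp only [Set.mem_setOf_eq, Set.mem_univ, iff_true]
  refine ⟨V ∩ {0}, Or.inl (by simp [Set.mem_powerset_iff]),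
          V ∩ {1}, Or.inr (by simp [Set.mem_powerset_iff]), ?_, ?_⟩
  · ext x
    fin_cases x <;> simp
  · ext x
    fin_cases x <;> simp

lemma partB : plusE B₀ B₀ = B₀ := by
  unfold plusE B₀
  refine Prod.ext ?_ (by simp)
  ext V
  simp only [Set.mem_setOf_eq, Set.mem_powerset_iff]
  constructor
  · rintro ⟨V₁, h₁, V₂, h₂, rfl, -⟩
    exact Set.union_subset h₁ h₂
  · intro h
    exact ⟨V, h, ∅, by simp, by simp, by simp⟩

lemma A₀_ne : A₀ ≠ dsOne := by
  intro h
  have : (Set.univ : Set (Fin 2)) ∈ A₀.1 := by rw [h]; trivial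
  rcases this with h | h
  · exact absurd (h (Set.mem_univ 1)) (by simp [Fin.ext_iff])
  · exact absurd (h (Set.mem_univ 0)) (by simp [Fin.ext_iff])

lemma B₀_nsum (n : ℕ) : nsum B₀ n = B₀ := by
  induction n with
  | zero => rfl
  | succ n ih => rw [nsum, ih, partB]

lemma B₀_ne : B₀ ≠ dsOne := by
  intro h
  have : ({1} : Set (Fin 2)) ∈ B₀.1 := by rw [h]; trivial
  have := this (Set.mem_singleton 1)
  simp [Fin.ext_iff] at this

theorem stmt10 :
    plusE A₀ A₀ = dsOne ∧ plusE B₀ B₀ = B₀ ∧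
    ordOf A₀ = 2 ∧ ordOf B₀ = ⊤ := by
  refine ⟨partA, partB, ?_, ?_⟩
  · unfold ordOf
    apply le_antisymm
    · apply sInf_le
      exact ⟨1, by norm_num, by rw [nsum, nsum, partA]⟩
    · apply le_sInf
      rintro m ⟨n, rfl, hn⟩
      match n with
      | 0 => exact absurd hn A₀_ne
      | n + 1 =>
        push_cast
        have : (1 : ℕ∞) ≤ (n : ℕ∞) + 1 := le_add_self
        calc (2 : ℕ∞) = 1 + 1 := by norm_num
        _ ≤ (n : ℕ∞) + 1 + 1 := by gcongr
  · unfold ordOf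
    refine (congrArg sInf (?_ : _ = (∅ : Set ℕ∞))).trans sInf_empty
    ext m
    simp only [Set.mem_setOf_eq, Set.mem_empty_iff_false, iff_false]
    rintro ⟨n, -, hn⟩
    rw [B₀_nsum] at hn
    exact B₀_ne hn
end

section
/- Let ≅ be a congruence on a double-suited IFG_N-algebra containing Ω (compatible with ¬, +_N, and full cylindrification C). If X < Ω < Y in the order X ≤ Y iff (X⁺ ⊆ Y⁺ and Y⁻ ⊆ X⁻), and X ≅ Y, then ≅ is the total congruence. -/
open Set

open Classical in
/-- Full cylindrification of all variables: sends `X` to 0 if `X = 0`, to `Ω` if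
`0 < X ≤ Ω`, and to 1 if `X ≰ Ω`. -/
noncomputable def cylFull {α : Type*} (X : DPair α) : DPair α :=
  if X = dsZero then dsZero else if leD X dsOmega then dsOmega else dsOne

theorem stmt13 {N A : Type*} (S : Set (DPair (N → A)))
    (hS : ∀ X ∈ S, DoubleSuit X) (hOm : dsOmega ∈ S)
    (hSneg : ∀ X ∈ S, dsNeg X ∈ S)
    (hSplus : ∀ X ∈ S, ∀ Y ∈ S, plusN X Y ∈ S)
    (hScyl : ∀ X ∈ S, cylFull X ∈ S)
    (R : DPair (N → A) → DPair (N → A) → Prop) (hEq : Equivalence R)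
    (hRneg : ∀ X ∈ S, ∀ Y ∈ S, R X Y → R (dsNeg X) (dsNeg Y))
    (hRplus : ∀ X ∈ S, ∀ Y ∈ S, ∀ X' ∈ S, ∀ Y' ∈ S,
      R X X' → R Y Y' → R (plusN X Y) (plusN X' Y'))
    (hRcyl : ∀ X ∈ S, ∀ Y ∈ S, R X Y → R (cylFull X) (cylFull Y))
    (X Y : DPair (N → A)) (hXS : X ∈ S) (hYS : Y ∈ S)
    (hXlt : leD X dsOmega ∧ X ≠ dsOmega) (hYgt : leD dsOmega Y ∧ Y ≠ dsOmega)
    (hRXY : R X Y) :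
    ∀ Z ∈ S, ∀ W ∈ S, R Z W := by
  obtain ⟨hXle, hXne⟩ := hXlt
  obtain ⟨hYge, hYne⟩ := hYgt
  -- Y is not ≤ Ω
  have hYnot : ¬ leD Y dsOmega := by
    intro h
    exact hYne (Prod.ext (Set.Subset.antisymm h.1 hYge.1)
      (Set.Subset.antisymm hYge.2 h.2))
  have hYzero : Y ≠ dsZero := by
    intro h
    exact hYnot (by rw [h]; exact ⟨subset_rfl, Set.subset_univ _⟩)
  have hcY : cylFull Y = dsOne := by
    rw [cylFull, if_neg hYzero, if_neg hYnot]
  have hOne : dsOne ∈ S := hcY ▸ hScyl Y hYS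
  have hnegOne : dsNeg (dsOne : DPair (N → A)) = dsZero := rfl
  have hZero : dsZero ∈ S := hnegOne ▸ hSneg dsOne hOne
  -- plusN computations at Ω
  have ePO0 : plusN (dsOmega : DPair (N → A)) dsZero = dsOmega := by
    simp [plusN, dsOmega, dsZero]
  have ePO1 : plusN (dsOmega : DPair (N → A)) dsOne = dsOne := by
    simp [plusN, dsOmega, dsOne]
  -- R Ω 1
  have hROm1 : R dsOmega dsOne := by
    by_cases hX0 : X = dsZero
    · have hR01 : R dsZero dsOne := by
        have := hRcyl X hXS Y hYS hRXY
        rwa [hcY, hX0, cylFull, if_pos rfl] at this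
      have := hRplus dsOmega hOm dsZero hZero dsOmega hOm dsOne hOne
        (hEq.refl _) hR01
      rwa [ePO0, ePO1] at this
    · have hcX : cylFull X = dsOmega := by
        rw [cylFull, if_neg hX0, if_pos hXle]
      have := hRcyl X hXS Y hYS hRXY
      rwa [hcX, hcY] at this
  -- R 0 Ω
  have hR0Om : R dsZero dsOmega := by
    have := hRneg dsOmega hOm dsOne hOne hROm1
    exact hEq.symm this
  -- every Z is related to 1
  have key : ∀ Z ∈ S, R Z dsOne := by
    intro Z hZS
    obtain ⟨⟨_, _⟩, ⟨_, _⟩, hint⟩ := hS Z hZS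
    have h0p : (∅ : Set (N → A)) ∈ Z.1 := by
      have : (∅ : Set (N → A)) ∈ Z.1 ∩ Z.2 := by rw [hint]; rfl
      exact this.1
    have h0m : (∅ : Set (N → A)) ∈ Z.2 := by
      have : (∅ : Set (N → A)) ∈ Z.1 ∩ Z.2 := by rw [hint]; rfl
      exact this.2
    have e1 : plusN Z dsZero = Z := by
      have : Z.1 ∪ {∅} = Z.1 :=
        Set.union_eq_self_of_subset_right (Set.singleton_subset_iff.mpr h0p)
      simp [plusN, dsZero, this]
    have e2 : plusN Z dsOmega = (Z.1, {∅}) := by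
      have h1 : Z.1 ∪ {∅} = Z.1 :=
        Set.union_eq_self_of_subset_right (Set.singleton_subset_iff.mpr h0p)
      have h2 : Z.2 ∩ {∅} = {∅} :=
        Set.inter_eq_self_of_subset_right (Set.singleton_subset_iff.mpr h0m)
      simp [plusN, dsOmega, h1, h2]
    have e3 : plusN Z dsOne = dsOne := by
      have h2 : Z.2 ∩ {∅} = {∅} :=
        Set.inter_eq_self_of_subset_right (Set.singleton_subset_iff.mpr h0m)
      simp [plusN, dsOne, h2]
    have hA : R Z (Z.1, {∅}) := by
      have := hRplus Z hZS dsZero hZero Z hZS dsOmega hOm (hEq.refl _) hR0Om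
      rwa [e1, e2] at this
    have hB : R (Z.1, {∅}) dsOne := by
      have := hRplus Z hZS dsOmega hOm Z hZS dsOne hOne (hEq.refl _) hROm1
      rwa [e2, e3] at this
    exact hEq.trans hA hB
  intro Z hZS W hWS
  exact hEq.trans (key Z hZS) (hEq.symm (key W hWS))
end

section
/- Let ≅ be a congruence on a double-suited IFG_N-algebra containing Ω that is not the trivial (identity) congruence. Then there exist elements X, Y of the algebra with X ≅ Y and Ω ≤ X < Y. -/
open Set

theorem stmt14 {N A : Type*} (S : Set (DPair (N → A)))
    (hS : ∀ X ∈ S, DoubleSuit X) (hOm : dsOmega ∈ S)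
    (hSneg : ∀ X ∈ S, dsNeg X ∈ S)
    (hSplus : ∀ X ∈ S, ∀ Y ∈ S, plusN X Y ∈ S)
    (R : DPair (N → A) → DPair (N → A) → Prop) (hEq : Equivalence R)
    (hRneg : ∀ X ∈ S, ∀ Y ∈ S, R X Y → R (dsNeg X) (dsNeg Y))
    (hRplus : ∀ X ∈ S, ∀ Y ∈ S, ∀ X' ∈ S, ∀ Y' ∈ S,
      R X X' → R Y Y' → R (plusN X Y) (plusN X' Y'))
    (hnontriv : ∃ X ∈ S, ∃ Y ∈ S, R X Y ∧ X ≠ Y) :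
    ∃ X ∈ S, ∃ Y ∈ S, R X Y ∧ leD dsOmega X ∧ leD X Y ∧ X ≠ Y := by
  -- every member of S contains ∅ in both coordinates
  have hmem1 : ∀ X ∈ S, (∅ : Set (N → A)) ∈ X.1 := by
    intro X hX
    obtain ⟨⟨⟨V, hV⟩, hdc⟩, _, _⟩ := hS X hX
    exact hdc V hV ∅ (empty_subset V)
  have hmem2 : ∀ X ∈ S, (∅ : Set (N → A)) ∈ X.2 := by
    intro X hX
    obtain ⟨_, ⟨⟨V, hV⟩, hdc⟩, _⟩ := hS X hX
    exact hdc V hV ∅ (empty_subset V)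
  -- Ω + X = (X.1, {∅})
  have homega : ∀ X ∈ S, plusN dsOmega X = (X.1, {∅}) := by
    intro X hX
    have h1 : ({∅} : Set (Set (N → A))) ⊆ X.1 :=
      singleton_subset_iff.mpr (hmem1 X hX)
    have h2 : ({∅} : Set (Set (N → A))) ⊆ X.2 :=
      singleton_subset_iff.mpr (hmem2 X hX)
    simp only [plusN, dsOmega]
    rw [Set.union_eq_self_of_subset_left h1, Set.inter_eq_self_of_subset_left h2]
  -- X + X = X
  have hidem : ∀ X : DPair (N → A), plusN X X = X := by
    intro X
    simp [plusN]
  -- key step: from R P Q with P.1 ⊊ Q.1 produce the witnesses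
  have key : ∀ P ∈ S, ∀ Q ∈ S, R P Q → P.1 ⊆ Q.1 → P.1 ≠ Q.1 →
      ∃ X ∈ S, ∃ Y ∈ S, R X Y ∧ leD dsOmega X ∧ leD X Y ∧ X ≠ Y := by
    intro P hP Q hQ hR hle hne
    refine ⟨plusN dsOmega P, hSplus _ hOm _ hP, plusN dsOmega Q, hSplus _ hOm _ hQ,
      hRplus _ hOm _ hP _ hOm _ hQ (hEq.refl _) hR, ?_, ?_, ?_⟩
    · rw [homega P hP]
      exact ⟨singleton_subset_iff.mpr (hmem1 P hP), subset_rfl⟩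
    · rw [homega P hP, homega Q hQ]
      exact ⟨hle, subset_rfl⟩
    · rw [homega P hP, homega Q hQ]
      intro h
      exact hne (by simpa using congrArg Prod.fst h)
  -- from R U W with U.1 ≠ W.1 produce the witnesses
  have key2 : ∀ U ∈ S, ∀ W ∈ S, R U W → U.1 ≠ W.1 →
      ∃ X ∈ S, ∃ Y ∈ S, R X Y ∧ leD dsOmega X ∧ leD X Y ∧ X ≠ Y := by
    intro U hU W hW hR hne
    by_cases h : W.1 ⊆ U.1
    · -- use W ≤ W + U
      have hRZ : R W (plusN W U) := by
        have := hRplus _ hW _ hW _ hW _ hU (hEq.refl W) (hEq.symm hR)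
        rwa [hidem W] at this
      refine key W hW (plusN W U) (hSplus _ hW _ hU) hRZ subset_union_left ?_
      intro he
      have he' : W.1 = W.1 ∪ U.1 := he
      have hsub : U.1 ⊆ W.1 := by
        have h2 : U.1 ⊆ W.1 ∪ U.1 := subset_union_right
        rwa [← he'] at h2
      exact hne (Subset.antisymm hsub h)
    · -- use U ≤ U + W
      have hRZ : R U (plusN U W) := by
        have := hRplus _ hU _ hU _ hU _ hW (hEq.refl U) hR
        rwa [hidem U] at this
      refine key U hU (plusN U W) (hSplus _ hU _ hW) hRZ subset_union_left ?_
      intro he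
      have he' : U.1 = U.1 ∪ W.1 := he
      apply h
      have h2 : W.1 ⊆ U.1 ∪ W.1 := subset_union_right
      rwa [← he'] at h2
  obtain ⟨U, hU, W, hW, hR, hne⟩ := hnontriv
  by_cases h1 : U.1 = W.1
  · have h2 : U.2 ≠ W.2 := fun h => hne (Prod.ext h1 h)
    exact key2 (dsNeg U) (hSneg _ hU) (dsNeg W) (hSneg _ hW) (hRneg _ hU _ hW hR) h2
  · exact key2 U hU W hW hR h1
end

section
/- The algebra of all double suits over N → A (for A with at least two elements) is simple: every congruence compatible with +_∅ is either the identity or the total relation. Key step: if X ≇ Y with V ∈ Y⁺ \ X⁺, and Z = (P((N→A) \ V), P(V)), then (X +_∅ Z)⁺ does not contain the full team N → A while (Y +_∅ Z)⁺ does, hence X +_∅ Z ≠ 1 = Y +_∅ Z. -/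
open Set

lemma suit_empty {α : Type*} {X : Set (Set α)} (h : Suit X) : ∅ ∈ X := by
  obtain ⟨⟨V, hV⟩, hd⟩ := h
  exact hd V hV ∅ (Set.empty_subset V)

lemma ds_mem_both {α : Type*} {X : DPair α} (h : DoubleSuit X) {W : Set α}
    (h1 : W ∈ X.1) (h2 : W ∈ X.2) : W = ∅ := by
  have hW : W ∈ ({∅} : Set (Set α)) := h.2.2 ▸ (⟨h1, h2⟩ : W ∈ X.1 ∩ X.2)
  simpa using hW

lemma ds_plusE {α : Type*} {X Z : DPair α} (hX : DoubleSuit X) (hZ : DoubleSuit Z) :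
    DoubleSuit (plusE X Z) := by
  refine ⟨⟨⟨∅, ⟨∅, suit_empty hX.1, ∅, suit_empty hZ.1, by simp, by simp⟩⟩, ?_⟩,
    ⟨⟨∅, suit_empty hX.2.1, suit_empty hZ.2.1⟩,
     fun W hW W' hW' => ⟨hX.2.1.2 W hW.1 W' hW', hZ.2.1.2 W hW.2 W' hW'⟩⟩, ?_⟩
  · rintro W ⟨V₁, h1, V₂, h2, rfl, hdisj⟩ W' hsub
    refine ⟨W' ∩ V₁, hX.1.2 V₁ h1 _ Set.inter_subset_right,
      W' ∩ V₂, hZ.1.2 V₂ h2 _ Set.inter_subset_right, ?_, ?_⟩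
    · rw [← Set.inter_union_distrib_left, Set.inter_eq_left.2 hsub]
    · ext x
      simp only [Set.mem_inter_iff, Set.mem_empty_iff_false, iff_false]
      have := Set.eq_empty_iff_forall_notMem.1 hdisj x
      simp only [Set.mem_inter_iff] at this
      tauto
  · ext W
    simp only [Set.mem_inter_iff, Set.mem_singleton_iff]
    constructor
    · rintro ⟨⟨V₁, h1, V₂, h2, rfl, hdisj⟩, hW2, hWZ2⟩
      have hV1 : V₁ = ∅ := ds_mem_both hX h1 (hX.2.1.2 _ hW2 V₁ Set.subset_union_left)
      have hV2 : V₂ = ∅ := ds_mem_both hZ h2 (hZ.2.1.2 _ hWZ2 V₂ Set.subset_union_right)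
      simp [hV1, hV2]
    · rintro rfl
      exact ⟨⟨∅, suit_empty hX.1, ∅, suit_empty hZ.1, by simp, by simp⟩,
        suit_empty hX.2.1, suit_empty hZ.2.1⟩

lemma ds_powV {α : Type*} (V : Set α) : DoubleSuit ((𝒫 Vᶜ, 𝒫 V) : DPair α) := by
  refine ⟨⟨⟨∅, by simp⟩, fun W hW W' hW' => (Set.mem_powerset_iff _ _).2
      (hW'.trans ((Set.mem_powerset_iff _ _).1 hW))⟩,
    ⟨⟨∅, by simp⟩, fun W hW W' hW' => (Set.mem_powerset_iff _ _).2
      (hW'.trans ((Set.mem_powerset_iff _ _).1 hW))⟩, ?_⟩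
  ext W
  simp only [Set.mem_inter_iff, Set.mem_powerset_iff, Set.mem_singleton_iff]
  constructor
  · rintro ⟨h1, h2⟩
    apply Set.subset_empty_iff.1
    rw [← Set.inter_compl_self V]
    exact Set.subset_inter h2 h1
  · rintro rfl
    simp

lemma key_step {N A : Type*} {X Y : DPair (N → A)} {V : Set (N → A)}
    (hX : DoubleSuit X) (hY : DoubleSuit Y) (hVY : V ∈ Y.1) (hVX : V ∉ X.1) :
    (Set.univ : Set (N → A)) ∉ (plusE X (𝒫 Vᶜ, 𝒫 V)).1 ∧
    (Set.univ : Set (N → A)) ∈ (plusE Y (𝒫 Vᶜ, 𝒫 V)).1 ∧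
    plusE X (𝒫 Vᶜ, 𝒫 V) ≠ dsOne ∧ plusE Y (𝒫 Vᶜ, 𝒫 V) = dsOne := by
  have hnot : (Set.univ : Set (N → A)) ∉ (plusE X (𝒫 Vᶜ, 𝒫 V)).1 := by
    rintro ⟨V₁, h1, V₂, h2, heq, hdisj⟩
    have h2' : V₂ ⊆ Vᶜ := (Set.mem_powerset_iff _ _).1 h2
    have hsub : V ⊆ V₁ := by
      intro x hx
      have hx' : x ∈ V₁ ∪ V₂ := heq ▸ Set.mem_univ x
      rcases hx' with h | h
      · exact h
      · exact absurd hx (h2' h)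
    exact hVX (hX.1.2 V₁ h1 V hsub)
  have hmem : (Set.univ : Set (N → A)) ∈ (plusE Y (𝒫 Vᶜ, 𝒫 V)).1 :=
    ⟨V, hVY, Vᶜ, (Set.mem_powerset_iff _ _).2 (subset_refl _),
      (Set.union_compl_self V).symm, Set.inter_compl_self V⟩
  refine ⟨hnot, hmem, ?_, ?_⟩
  · intro h
    apply hnot
    rw [h]
    exact Set.mem_univ _
  · have h1 : (plusE Y (𝒫 Vᶜ, 𝒫 V)).1 = Set.univ := by
      ext W
      simp only [Set.mem_univ, iff_true]
      refine ⟨W ∩ V, hY.1.2 V hVY _ Set.inter_subset_right,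
        W ∩ Vᶜ, (Set.mem_powerset_iff _ _).2 Set.inter_subset_right,
        (Set.inter_union_compl W V).symm, ?_⟩
      ext x
      simp only [Set.mem_inter_iff, Set.mem_compl_iff, Set.mem_empty_iff_false, iff_false]
      tauto
    have h2 : (plusE Y (𝒫 Vᶜ, 𝒫 V)).2 = {∅} := by
      ext W
      simp only [plusE, Set.mem_inter_iff, Set.mem_powerset_iff, Set.mem_singleton_iff]
      constructor
      · rintro ⟨hW2, hWV⟩
        exact ds_mem_both hY (hY.1.2 V hVY W hWV) hW2
      · rintro rfl
        exact ⟨suit_empty hY.2.1, Set.empty_subset V⟩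
    exact Prod.ext h1 h2

lemma ds_neg {α : Type*} {X : DPair α} (hX : DoubleSuit X) : DoubleSuit (dsNeg X) :=
  ⟨hX.2.1, hX.1, by rw [show (dsNeg X).1 ∩ (dsNeg X).2 = X.2 ∩ X.1 from rfl,
    Set.inter_comm]; exact hX.2.2⟩


theorem stmt15 {N A : Type*} (hA : ∃ a b : A, a ≠ b)
    (R : DPair (N → A) → DPair (N → A) → Prop) (hEq : Equivalence R)
    (hRneg : ∀ X Y : DPair (N → A), DoubleSuit X → DoubleSuit Y →
      R X Y → R (dsNeg X) (dsNeg Y))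
    (hRplus : ∀ X Y X' Y' : DPair (N → A), DoubleSuit X → DoubleSuit Y →
      DoubleSuit X' → DoubleSuit Y' →
      R X X' → R Y Y' → R (plusE X Y) (plusE X' Y'))
    (htot : ∀ X : DPair (N → A), DoubleSuit X →
      ((R X dsOne ∧ X ≠ dsOne) ∨ (R X dsZero ∧ X ≠ dsZero)) →
      ∀ Z W : DPair (N → A), DoubleSuit Z → DoubleSuit W → R Z W) :
    -- key step
    (∀ (X Y : DPair (N → A)) (V : Set (N → A)), DoubleSuit X → DoubleSuit Y →
      V ∈ Y.1 → V ∉ X.1 →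
      (Set.univ : Set (N → A)) ∉ (plusE X (𝒫 Vᶜ, 𝒫 V)).1 ∧
      (Set.univ : Set (N → A)) ∈ (plusE Y (𝒫 Vᶜ, 𝒫 V)).1 ∧
      plusE X (𝒫 Vᶜ, 𝒫 V) ≠ dsOne ∧ plusE Y (𝒫 Vᶜ, 𝒫 V) = dsOne) ∧
    -- simplicity: R is the identity or the total relation on double suits
    ((∀ X Y : DPair (N → A), DoubleSuit X → DoubleSuit Y → R X Y → X = Y) ∨
      (∀ X Y : DPair (N → A), DoubleSuit X → DoubleSuit Y → R X Y)) := by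
  refine ⟨fun X Y V hX hY hVY hVX => key_step hX hY hVY hVX, ?_⟩
  -- if some related pair differs in the first coordinate, R is total
  have main1 : ∀ X Y : DPair (N → A), ∀ V : Set (N → A), DoubleSuit X → DoubleSuit Y →
      R X Y → V ∈ Y.1 → V ∉ X.1 →
      ∀ Z W : DPair (N → A), DoubleSuit Z → DoubleSuit W → R Z W := by
    intro X Y V hX hY hR hVY hVX
    obtain ⟨_, _, h3, h4⟩ := key_step hX hY hVY hVX
    have hRp := hRplus X (𝒫 Vᶜ, 𝒫 V) Y (𝒫 Vᶜ, 𝒫 V) hX (ds_powV V) hY (ds_powV V)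
      hR (hEq.refl _)
    rw [h4] at hRp
    exact htot _ (ds_plusE hX (ds_powV V)) (Or.inl ⟨hRp, h3⟩)
  have main2 : ∀ X Y : DPair (N → A), DoubleSuit X → DoubleSuit Y →
      R X Y → X.1 ≠ Y.1 →
      ∀ Z W : DPair (N → A), DoubleSuit Z → DoubleSuit W → R Z W := by
    intro X Y hX hY hR hne
    obtain ⟨V, hV⟩ : ∃ V, ¬ (V ∈ X.1 ↔ V ∈ Y.1) := by
      by_contra h
      push_neg at h
      exact hne (Set.ext fun V => h V)
    by_cases hVX : V ∈ X.1
    · have hVY : V ∉ Y.1 := fun hVY => hV ⟨fun _ => hVY, fun _ => hVX⟩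
      exact main1 Y X V hY hX (hEq.symm hR) hVX hVY
    · have hVY : V ∈ Y.1 := by tauto
      exact main1 X Y V hX hY hR hVY hVX
  by_cases hid : ∀ X Y : DPair (N → A), DoubleSuit X → DoubleSuit Y → R X Y → X = Y
  · exact Or.inl hid
  · right
    push_neg at hid
    obtain ⟨X, Y, hX, hY, hR, hne⟩ := hid
    by_cases h1 : X.1 = Y.1
    · have h2 : X.2 ≠ Y.2 := by
        intro h2
        exact hne (Prod.ext h1 h2)
      exact main2 (dsNeg X) (dsNeg Y) (ds_neg hX) (ds_neg hY)
        (hRneg X Y hX hY hR) h2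
    · exact main2 X Y hX hY hR h1
end

section
/- Over A = {0,1,2} with teams being subsets of A, let A₁ = (P({0,1}), {∅}) and B₁ = (P({0}) ∪ P({1}), {∅}), and let S = {0, ¬A₁, ¬B₁, Ω, B₁, A₁, 1}. The equivalence relation identifying exactly A₁ with B₁ and ¬A₁ with ¬B₁ (and nothing else) is a nontrivial, non-total congruence on S with respect to the operations ¬, +_∅, and +_{full}. In particular, this 7-element algebra is not simple. -/
open Set

/-- `A₁ = (P({0,1}), {∅})` over `A = {0,1,2}`. -/
def A₁ : DPair (Fin 3) := (𝒫 ({0, 1} : Set (Fin 3)), {∅})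

/-- `B₁ = (P({0}) ∪ P({1}), {∅})` over `A = {0,1,2}`. -/
def B₁ : DPair (Fin 3) := (𝒫 ({0} : Set (Fin 3)) ∪ 𝒫 ({1} : Set (Fin 3)), {∅})

/-- The 7-element subuniverse `S = {0, ¬A₁, ¬B₁, Ω, B₁, A₁, 1}`. -/
def S17 : Set (DPair (Fin 3)) :=
  {dsZero, dsNeg A₁, dsNeg B₁, dsOmega, B₁, A₁, dsOne}

/-- The relation identifying exactly `A₁` with `B₁` and `¬A₁` with `¬B₁`. -/
def R17 (X Y : DPair (Fin 3)) : Prop :=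
  X = Y ∨ (X = A₁ ∧ Y = B₁) ∨ (X = B₁ ∧ Y = A₁) ∨
    (X = dsNeg A₁ ∧ Y = dsNeg B₁) ∨ (X = dsNeg B₁ ∧ Y = dsNeg A₁)

-- ===== auxiliary material =====
namespace Stmt17Aux

def e0 : Set (Set (Fin 3)) := {∅}
def pb : Set (Set (Fin 3)) := 𝒫 ({0} : Set (Fin 3)) ∪ 𝒫 ({1} : Set (Fin 3))
def pa : Set (Set (Fin 3)) := 𝒫 ({0, 1} : Set (Fin 3))

def sumE (X Y : Set (Set (Fin 3))) : Set (Set (Fin 3)) :=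
  {V | ∃ V₁ ∈ X, ∃ V₂ ∈ Y, V = V₁ ∪ V₂ ∧ V₁ ∩ V₂ = ∅}

lemma plusE_def (X Y : DPair (Fin 3)) : plusE X Y = (sumE X.1 Y.1, X.2 ∩ Y.2) := rfl

lemma A1_eq : A₁ = (pa, e0) := rfl
lemma B1_eq : B₁ = (pb, e0) := rfl
lemma zero_eq : (dsZero : DPair (Fin 3)) = (e0, Set.univ) := rfl
lemma one_eq : (dsOne : DPair (Fin 3)) = (Set.univ, e0) := rfl
lemma omega_eq : (dsOmega : DPair (Fin 3)) = (e0, e0) := rfl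
lemma negA_eq : dsNeg A₁ = (e0, pa) := rfl
lemma negB_eq : dsNeg B₁ = (e0, pb) := rfl

lemma empty_mem_pb : ∅ ∈ pb := Or.inl (Set.empty_subset _)
lemma empty_mem_pa : ∅ ∈ pa := Set.empty_subset _
lemma pb_subset_pa : pb ⊆ pa := by
  rintro V (h | h) <;> intro x hx
  · exact Set.mem_insert_iff.mpr (Or.inl (h hx))
  · exact Set.mem_insert_iff.mpr (Or.inr (h hx))

-- unions
@[simp] lemma e0_union_pb : e0 ∪ pb = pb := Set.union_eq_self_of_subset_left (by simpa [e0] using empty_mem_pb)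
@[simp] lemma e0_union_pa : e0 ∪ pa = pa := Set.union_eq_self_of_subset_left (by simpa [e0] using empty_mem_pa)
@[simp] lemma pb_union_e0 : pb ∪ e0 = pb := by rw [Set.union_comm, e0_union_pb]
@[simp] lemma pa_union_e0 : pa ∪ e0 = pa := by rw [Set.union_comm, e0_union_pa]
@[simp] lemma pb_union_pa : pb ∪ pa = pa := Set.union_eq_self_of_subset_left pb_subset_pa
@[simp] lemma pa_union_pb : pa ∪ pb = pa := by rw [Set.union_comm, pb_union_pa]

-- intersections
@[simp] lemma pa_inter_pb : pa ∩ pb = pb := Set.inter_eq_self_of_subset_right pb_subset_pa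
@[simp] lemma pb_inter_pa : pb ∩ pa = pb := by rw [Set.inter_comm, pa_inter_pb]
@[simp] lemma pa_inter_e0 : pa ∩ e0 = e0 := Set.inter_eq_self_of_subset_right (by simpa [e0] using empty_mem_pa)
@[simp] lemma e0_inter_pa : e0 ∩ pa = e0 := by rw [Set.inter_comm, pa_inter_e0]
@[simp] lemma pb_inter_e0 : pb ∩ e0 = e0 := Set.inter_eq_self_of_subset_right (by simpa [e0] using empty_mem_pb)
@[simp] lemma e0_inter_pb : e0 ∩ pb = e0 := by rw [Set.inter_comm, pb_inter_e0]

-- sumE computations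
lemma sumE_comm (X Y : Set (Set (Fin 3))) : sumE X Y = sumE Y X := by
  ext V
  constructor <;> rintro ⟨V₁, h₁, V₂, h₂, rfl, hd⟩ <;>
    exact ⟨V₂, h₂, V₁, h₁, Set.union_comm _ _, by rwa [Set.inter_comm]⟩

@[simp] lemma sumE_e0_left (X : Set (Set (Fin 3))) : sumE e0 X = X := by
  ext V
  constructor
  · rintro ⟨V₁, h₁, V₂, h₂, rfl, -⟩
    simp only [e0, Set.mem_singleton_iff] at h₁
    simpa [h₁] using h₂
  · intro hV
    exact ⟨∅, rfl, V, hV, by simp, by simp⟩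

@[simp] lemma sumE_e0_right (X : Set (Set (Fin 3))) : sumE X e0 = X := by
  rw [sumE_comm, sumE_e0_left]

lemma sumE_univ_right {X : Set (Set (Fin 3))} (h : ∅ ∈ X) : sumE X Set.univ = Set.univ := by
  ext V
  simp only [Set.mem_univ, iff_true]
  exact ⟨∅, h, V, trivial, by simp, by simp⟩

lemma sumE_univ_left {X : Set (Set (Fin 3))} (h : ∅ ∈ X) : sumE Set.univ X = Set.univ := by
  rw [sumE_comm, sumE_univ_right h]

@[simp] lemma sumE_pb_univ : sumE pb Set.univ = Set.univ := sumE_univ_right empty_mem_pb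
@[simp] lemma sumE_univ_pb : sumE Set.univ pb = Set.univ := sumE_univ_left empty_mem_pb
@[simp] lemma sumE_pa_univ : sumE pa Set.univ = Set.univ := sumE_univ_right empty_mem_pa
@[simp] lemma sumE_univ_pa : sumE Set.univ pa = Set.univ := sumE_univ_left empty_mem_pa
@[simp] lemma sumE_univ_univ : sumE Set.univ Set.univ = Set.univ := sumE_univ_right trivial

lemma sumE_sub_pa {X Y : Set (Set (Fin 3))} (hX : X ⊆ pa) (hY : Y ⊆ pa) :
    sumE X Y ⊆ pa := by
  rintro V ⟨V₁, h₁, V₂, h₂, rfl, -⟩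
  exact Set.union_subset (hX h₁) (hY h₂)

@[simp] lemma sumE_pa_pa : sumE pa pa = pa := by
  apply Set.Subset.antisymm (sumE_sub_pa le_rfl le_rfl)
  intro V hV
  exact ⟨∅, empty_mem_pa, V, hV, by simp, by simp⟩

@[simp] lemma sumE_pa_pb : sumE pa pb = pa := by
  apply Set.Subset.antisymm (sumE_sub_pa le_rfl pb_subset_pa)
  intro V hV
  exact ⟨V, hV, ∅, empty_mem_pb, by simp, by simp⟩

@[simp] lemma sumE_pb_pa : sumE pb pa = pa := by rw [sumE_comm, sumE_pa_pb]

@[simp] lemma sumE_pb_pb : sumE pb pb = pa := by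
  apply Set.Subset.antisymm (sumE_sub_pa pb_subset_pa pb_subset_pa)
  intro V hV
  refine ⟨V ∩ {0}, Or.inl (Set.inter_subset_right), V ∩ {1}, Or.inr (Set.inter_subset_right),
    ?_, ?_⟩
  · rw [← Set.inter_union_distrib_left]
    exact (Set.inter_eq_self_of_subset_left hV).symm
  · ext x
    simp only [Set.mem_inter_iff, Set.mem_singleton_iff, Set.mem_empty_iff_false, iff_false]
    rintro ⟨⟨-, rfl⟩, -, h⟩
    exact absurd h (by decide)

lemma plusE_comm (X Y : DPair (Fin 3)) : plusE X Y = plusE Y X := by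
  rw [plusE_def, plusE_def, sumE_comm, Set.inter_comm]

lemma plusN_comm (X Y : DPair (Fin 3)) : plusN X Y = plusN Y X := by
  unfold plusN; rw [Set.union_comm, Set.inter_comm]

-- disequalities
lemma pa_ne_pb : pa ≠ pb := by
  intro h
  have h1 : ({0, 1} : Set (Fin 3)) ∈ pa := Set.Subset.refl _
  rw [h] at h1
  rcases h1 with h' | h'
  · have h2 := h' (show (1 : Fin 3) ∈ ({0, 1} : Set (Fin 3)) by simp)
    rw [Set.mem_singleton_iff] at h2
    exact absurd h2 (by decide)
  · have h2 := h' (show (0 : Fin 3) ∈ ({0, 1} : Set (Fin 3)) by simp)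
    rw [Set.mem_singleton_iff] at h2
    exact absurd h2 (by decide)

lemma e0_ne_pa : e0 ≠ pa := by
  intro h
  have h1 : ({0} : Set (Fin 3)) ∈ pa :=
    Set.singleton_subset_iff.mpr (Set.mem_insert _ _)
  rw [← h] at h1
  rw [e0, Set.mem_singleton_iff] at h1
  exact Set.singleton_ne_empty _ h1

lemma e0_ne_pb : e0 ≠ pb := by
  intro h
  have h1 : ({0} : Set (Fin 3)) ∈ pb := Or.inl (fun x hx => hx)
  rw [← h] at h1
  rw [e0, Set.mem_singleton_iff] at h1
  exact Set.singleton_ne_empty _ h1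

lemma e0_ne_univ : e0 ≠ (Set.univ : Set (Set (Fin 3))) := by
  intro h
  have h1 : ({0} : Set (Fin 3)) ∈ e0 := h ▸ trivial
  rw [e0, Set.mem_singleton_iff] at h1
  exact Set.singleton_ne_empty _ h1

lemma univ_ne_pa : (Set.univ : Set (Set (Fin 3))) ≠ pa := by
  intro h
  have h1 : ({2} : Set (Fin 3)) ∈ pa := h ▸ trivial
  have h2 := h1 (Set.mem_singleton (2 : Fin 3))
  rw [Set.mem_insert_iff, Set.mem_singleton_iff] at h2
  rcases h2 with h2 | h2 <;> exact absurd h2 (by decide)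

lemma univ_ne_pb : (Set.univ : Set (Set (Fin 3))) ≠ pb := by
  intro h
  have h1 : ({2} : Set (Fin 3)) ∈ pb := h ▸ trivial
  rcases h1 with h' | h' <;>
  · have h2 := h' (Set.mem_singleton (2 : Fin 3))
    rw [Set.mem_singleton_iff] at h2
    exact absurd h2 (by decide)

lemma A1_ne_B1 : A₁ ≠ B₁ := by
  rw [A1_eq, B1_eq]; intro h; exact pa_ne_pb (congrArg Prod.fst h)

end Stmt17Aux
namespace Stmt17Aux

lemma A1_ne_negA : A₁ ≠ dsNeg A₁ := fun h => e0_ne_pa.symm (congrArg Prod.fst h)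
lemma A1_ne_negB : A₁ ≠ dsNeg B₁ := fun h => e0_ne_pa.symm (congrArg Prod.fst h)
lemma B1_ne_negA : B₁ ≠ dsNeg A₁ := fun h => e0_ne_pb.symm (congrArg Prod.fst h)
lemma B1_ne_negB : B₁ ≠ dsNeg B₁ := fun h => e0_ne_pb.symm (congrArg Prod.fst h)

lemma R17_refl (x : DPair (Fin 3)) : R17 x x := Or.inl rfl

lemma R17_symm {x y : DPair (Fin 3)} (h : R17 x y) : R17 y x := by
  rcases h with rfl | ⟨rfl, rfl⟩ | ⟨rfl, rfl⟩ | ⟨rfl, rfl⟩ | ⟨rfl, rfl⟩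
  · exact Or.inl rfl
  · exact Or.inr (Or.inr (Or.inl ⟨rfl, rfl⟩))
  · exact Or.inr (Or.inl ⟨rfl, rfl⟩)
  · exact Or.inr (Or.inr (Or.inr (Or.inr ⟨rfl, rfl⟩)))
  · exact Or.inr (Or.inr (Or.inr (Or.inl ⟨rfl, rfl⟩)))

lemma R17_trans {x y z : DPair (Fin 3)} (h1 : R17 x y) (h2 : R17 y z) : R17 x z := by
  rcases h1 with rfl | ⟨rfl, rfl⟩ | ⟨rfl, rfl⟩ | ⟨rfl, rfl⟩ | ⟨rfl, rfl⟩
  · exact h2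
  all_goals
    rcases h2 with rfl | ⟨h, rfl⟩ | ⟨h, rfl⟩ | ⟨h, rfl⟩ | ⟨h, rfl⟩ <;>
    first
      | exact Or.inl rfl
      | exact Or.inr (Or.inl ⟨rfl, rfl⟩)
      | exact Or.inr (Or.inr (Or.inl ⟨rfl, rfl⟩))
      | exact Or.inr (Or.inr (Or.inr (Or.inl ⟨rfl, rfl⟩)))
      | exact Or.inr (Or.inr (Or.inr (Or.inr ⟨rfl, rfl⟩)))
      | exact absurd h B1_ne_negA
      | exact absurd h B1_ne_negB
      | exact absurd h A1_ne_negA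
      | exact absurd h A1_ne_negB
      | exact absurd h.symm B1_ne_negA
      | exact absurd h.symm B1_ne_negB
      | exact absurd h.symm A1_ne_negA
      | exact absurd h.symm A1_ne_negB

lemma memS_iff {Z : DPair (Fin 3)} : Z ∈ S17 ↔
    Z = dsZero ∨ Z = dsNeg A₁ ∨ Z = dsNeg B₁ ∨ Z = dsOmega ∨ Z = B₁ ∨ Z = A₁ ∨ Z = dsOne := by
  simp [S17]

lemma congE_A : ∀ Z ∈ S17, R17 (plusE A₁ Z) (plusE B₁ Z) := by
  intro Z hZ
  rcases memS_iff.mp hZ with rfl | rfl | rfl | rfl | rfl | rfl | rfl <;>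
    simp [R17, plusE_def, A1_eq, B1_eq, zero_eq, one_eq, omega_eq, negA_eq, negB_eq,
      Prod.ext_iff, dsNeg]

lemma congE_nA : ∀ Z ∈ S17, R17 (plusE (dsNeg A₁) Z) (plusE (dsNeg B₁) Z) := by
  intro Z hZ
  rcases memS_iff.mp hZ with rfl | rfl | rfl | rfl | rfl | rfl | rfl <;>
    simp [R17, plusE_def, A1_eq, B1_eq, zero_eq, one_eq, omega_eq, negA_eq, negB_eq,
      Prod.ext_iff, dsNeg]

lemma congN_A : ∀ Z ∈ S17, R17 (plusN A₁ Z) (plusN B₁ Z) := by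
  intro Z hZ
  rcases memS_iff.mp hZ with rfl | rfl | rfl | rfl | rfl | rfl | rfl <;>
    simp [R17, plusN, A1_eq, B1_eq, zero_eq, one_eq, omega_eq, negA_eq, negB_eq,
      Prod.ext_iff, dsNeg]

lemma congN_nA : ∀ Z ∈ S17, R17 (plusN (dsNeg A₁) Z) (plusN (dsNeg B₁) Z) := by
  intro Z hZ
  rcases memS_iff.mp hZ with rfl | rfl | rfl | rfl | rfl | rfl | rfl <;>
    simp [R17, plusN, A1_eq, B1_eq, zero_eq, one_eq, omega_eq, negA_eq, negB_eq,
      Prod.ext_iff, dsNeg]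

lemma congE_left {X X' : DPair (Fin 3)} (h : R17 X X') : ∀ Z ∈ S17, R17 (plusE X Z) (plusE X' Z) := by
  intro Z hZ
  rcases h with rfl | ⟨rfl, rfl⟩ | ⟨rfl, rfl⟩ | ⟨rfl, rfl⟩ | ⟨rfl, rfl⟩
  · exact R17_refl _
  · exact congE_A Z hZ
  · exact R17_symm (congE_A Z hZ)
  · exact congE_nA Z hZ
  · exact R17_symm (congE_nA Z hZ)

lemma congN_left {X X' : DPair (Fin 3)} (h : R17 X X') : ∀ Z ∈ S17, R17 (plusN X Z) (plusN X' Z) := by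
  intro Z hZ
  rcases h with rfl | ⟨rfl, rfl⟩ | ⟨rfl, rfl⟩ | ⟨rfl, rfl⟩ | ⟨rfl, rfl⟩
  · exact R17_refl _
  · exact congN_A Z hZ
  · exact R17_symm (congN_A Z hZ)
  · exact congN_nA Z hZ
  · exact R17_symm (congN_nA Z hZ)

end Stmt17Aux

open Stmt17Aux

theorem stmt17 :
    -- S is closed under the operations
    (∀ X ∈ S17, dsNeg X ∈ S17) ∧
    (∀ X ∈ S17, ∀ Y ∈ S17, plusE X Y ∈ S17 ∧ plusN X Y ∈ S17) ∧
    -- R is an equivalence relation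
    Equivalence R17 ∧
    -- R is a congruence on S
    (∀ X ∈ S17, ∀ Y ∈ S17, R17 X Y → R17 (dsNeg X) (dsNeg Y)) ∧
    (∀ X ∈ S17, ∀ Y ∈ S17, ∀ X' ∈ S17, ∀ Y' ∈ S17, R17 X X' → R17 Y Y' →
      R17 (plusE X Y) (plusE X' Y') ∧ R17 (plusN X Y) (plusN X' Y')) ∧
    -- R is nontrivial and non-total
    (R17 A₁ B₁ ∧ A₁ ≠ B₁) ∧ ¬ R17 dsZero dsOne := by
  refine ⟨?_, ?_, ⟨R17_refl, fun h => R17_symm h, fun h1 h2 => R17_trans h1 h2⟩, ?_, ?_,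
    ⟨Or.inr (Or.inl ⟨rfl, rfl⟩), A1_ne_B1⟩, ?_⟩
  · intro X hX
    rcases memS_iff.mp hX with rfl | rfl | rfl | rfl | rfl | rfl | rfl <;>
      refine memS_iff.mpr ?_ <;>
      simp [A1_eq, B1_eq, zero_eq, one_eq, omega_eq, dsNeg, Prod.ext_iff]
  · intro X hX Y hY
    rcases memS_iff.mp hX with rfl | rfl | rfl | rfl | rfl | rfl | rfl <;>
      rcases memS_iff.mp hY with rfl | rfl | rfl | rfl | rfl | rfl | rfl <;>
      constructor <;>
      refine memS_iff.mpr ?_ <;>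
      simp [plusE_def, plusN, A1_eq, B1_eq, zero_eq, one_eq, omega_eq, negA_eq, negB_eq,
        dsNeg, Prod.ext_iff]
  · intro X _ Y _ h
    rcases h with rfl | ⟨rfl, rfl⟩ | ⟨rfl, rfl⟩ | ⟨rfl, rfl⟩ | ⟨rfl, rfl⟩
    · exact Or.inl rfl
    · exact Or.inr (Or.inr (Or.inr (Or.inl ⟨rfl, rfl⟩)))
    · exact Or.inr (Or.inr (Or.inr (Or.inr ⟨rfl, rfl⟩)))
    · exact Or.inr (Or.inl ⟨rfl, rfl⟩)
    · exact Or.inr (Or.inr (Or.inl ⟨rfl, rfl⟩))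
  · intro X hX Y hY X' hX' Y' hY' h1 h2
    constructor
    · refine R17_trans (congE_left h1 Y hY) ?_
      rw [plusE_comm X' Y, plusE_comm X' Y']
      exact congE_left h2 X' hX'
    · refine R17_trans (congN_left h1 Y hY) ?_
      rw [plusN_comm X' Y, plusN_comm X' Y']
      exact congN_left h2 X' hX'
  · rintro (h | ⟨h, -⟩ | ⟨h, -⟩ | ⟨h, -⟩ | ⟨h, -⟩)
    · exact e0_ne_univ (congrArg Prod.fst h)
    · exact e0_ne_pa (congrArg Prod.fst h)
    · exact e0_ne_pb (congrArg Prod.fst h)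
    · exact univ_ne_pa (congrArg Prod.snd h)
    · exact univ_ne_pb (congrArg Prod.snd h)
end

section
/- For double suits X, Y over N → A: the full team N → A belongs to ((¬X +_∅ Y) ·_∅ (X +_∅ ¬Y))⁺ if and only if X = Y and X is perfect, i.e., there is a team V with X = (P(V), P((N→A) \ V)). -/
open Set

lemma ds_sub {α : Type*} {X : DPair α} (hX : DoubleSuit X) {S T : Set α}
    (hS : S ∈ X.1) (hT : T ∈ X.2) : S ⊆ Tᶜ := by
  intro s hs hst
  have h1 : ({s} : Set α) ∈ X.1 := hX.1.2 S hS {s} (by simpa using hs)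
  have h2 : ({s} : Set α) ∈ X.2 := hX.2.1.2 T hT {s} (by simpa using hst)
  have h3 : ({s} : Set α) ∈ X.1 ∩ X.2 := ⟨h1, h2⟩
  rw [hX.2.2] at h3
  simpa using h3

lemma compl_of_union {α : Type*} {W V : Set α}
    (hEq : (Set.univ : Set α) = W ∪ V) (hd : W ∩ V = ∅) : V = Wᶜ := by
  ext x
  constructor
  · intro hx hw
    have : x ∈ W ∩ V := ⟨hw, hx⟩
    simp [hd] at this
  · intro hx
    have hxu : x ∈ W ∪ V := by rw [← hEq]; trivial
    rcases hxu with h | h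
    · exact absurd h hx
    · exact h

theorem stmt19 {N A : Type*} (X Y : DPair (N → A))
    (hX : DoubleSuit X) (hY : DoubleSuit Y) :
    (Set.univ : Set (N → A)) ∈ (dotE (plusE (dsNeg X) Y) (plusE X (dsNeg Y))).1 ↔
      (X = Y ∧ ∃ V : Set (N → A), X = (𝒫 V, 𝒫 Vᶜ)) := by
  constructor
  · rintro ⟨⟨W, hW, V, hV, hEq1, hd1⟩, ⟨U, hU, W', hW', hEq2, hd2⟩⟩
    -- hW : W ∈ X.2, hV : V ∈ Y.1, hU : U ∈ X.1, hW' : W' ∈ Y.2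
    have hWc : V = Wᶜ := compl_of_union hEq1 hd1
    have hW'c : U = W'ᶜ := by
      have := compl_of_union (W := W') (V := U)
        (by rw [hEq2, Set.union_comm]) (by rw [Set.inter_comm]; exact hd2)
      exact this
    have hUV : U ⊆ V := by rw [hWc]; exact ds_sub hX hU hW
    have hVU : V ⊆ U := by rw [hW'c]; exact ds_sub hY hV hW'
    have hUeqV : U = V := Set.Subset.antisymm hUV hVU
    -- X.1 = 𝒫 U
    have hX1 : X.1 = 𝒫 U := by
      ext S
      constructor
      · intro hS
        have : S ⊆ Wᶜ := ds_sub hX hS hW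
        rw [← hWc, ← hUeqV] at this
        exact this
      · intro hS
        exact hX.1.2 U hU S hS
    have hWU : W = Uᶜ := by rw [hUeqV, hWc, compl_compl]
    have hX2 : X.2 = 𝒫 Uᶜ := by
      have hWX : Uᶜ ∈ X.2 := by rw [← hWU]; exact hW
      ext S
      constructor
      · intro hS s hs hu
        exact ds_sub hX hU hS hu hs
      · intro hS
        exact hX.2.1.2 Uᶜ hWX S hS
    have hW'U : W' = Uᶜ := by rw [hW'c, compl_compl]
    have hY1 : Y.1 = 𝒫 U := by
      ext S
      constructor
      · intro hS
        have : S ⊆ W'ᶜ := ds_sub hY hS hW'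
        rwa [← hW'c] at this
      · intro hS
        have hV' : U ∈ Y.1 := by rw [hUeqV]; exact hV
        exact hY.1.2 U hV' S hS
    have hY2 : Y.2 = 𝒫 Uᶜ := by
      have hWY : Uᶜ ∈ Y.2 := by rw [← hW'U]; exact hW'
      ext S
      constructor
      · intro hS s hs hu
        exact ds_sub hY hV hS (hUeqV ▸ hu) hs
      · intro hS
        exact hY.2.1.2 Uᶜ hWY S hS
    have hXp : X = (𝒫 U, 𝒫 Uᶜ) := Prod.ext hX1 hX2
    have hYp : Y = (𝒫 U, 𝒫 Uᶜ) := Prod.ext hY1 hY2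
    exact ⟨hXp.trans hYp.symm, U, hXp⟩
  · rintro ⟨hXY, V, hXp⟩
    subst hXY
    refine ⟨⟨Vᶜ, ?_, V, ?_, ?_, ?_⟩, ⟨V, ?_, Vᶜ, ?_, ?_, ?_⟩⟩ <;>
      simp [hXp, dsNeg, Set.union_comm, Set.inter_comm]
end
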